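/- arXiv:1606.06168 — 2 statements merged into one kernel-verified Lean document; each statement's English description precedes it below -/
import Mathlib

section
/- Let ε ∈ {1, −1}, let M be a ℤ-module and λ: M × M → ℤ an ε-symmetric ℤ-bilinear form whose radical {x ∈ M : λ(x, v) = 0 for all v ∈ M} consists of torsion elements. Let β: M' → M be an injective ℤ-linear map such that the quotient M / range(β) is isomorphic as an additive group to ℤ, and let λ' be the pulled-back form on M' defined by λ'(x, y) := λ(β(x), β(y)); let μ be any function from M to a type with a zero element and set μ' := μ ∘ β. Suppose L' ≤ M' is a Lagrangian for (λ', μ'), and that there exists y' ∈ L' such that λ'(y', w) = 0 for every w ∈ M' and β(y') is not a torsion element of M. Then the image β(L') is a Lagrangian for (λ, μ) in M. -/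
/-- `L` is a Lagrangian for the form `lam` with refinement `mu` if the orthogonal
complement `{x | ∀ v ∈ L, lam x v = 0}` equals `L` and `mu` vanishes on `L`. -/
def IsLagrangian {M A : Type*} [AddCommGroup M] [Module ℤ M] [Zero A]
    (lam : M → M → ℤ) (mu : M → A) (L : Submodule ℤ M) : Prop :=
  {x : M | ∀ v ∈ L, lam x v = 0} = (L : Set M) ∧ ∀ l ∈ L, mu l = 0

theorem lagrangian_image_of_finite_order_surgery
    {M M' A : Type*} [AddCommGroup M] [Module ℤ M]
    [AddCommGroup M'] [Module ℤ M'] [Zero A]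
    (ε : ℤ) (hε : ε = 1 ∨ ε = -1)
    (lam : M →ₗ[ℤ] M →ₗ[ℤ] ℤ)
    (hsymm : ∀ x y : M, lam x y = ε * lam y x)
    (hrad : ∀ x : M, (∀ v : M, lam x v = 0) → IsOfFinAddOrder x)
    (β : M' →ₗ[ℤ] M) (hβ : Function.Injective β)
    (hquot : Nonempty ((M ⧸ LinearMap.range β) ≃+ ℤ))
    (mu : M → A)
    (L' : Submodule ℤ M')
    (hL' : IsLagrangian (fun x y => lam (β x) (β y)) (fun x => mu (β x)) L')
    (y' : M') (hy'L : y' ∈ L')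
    (hy'perp : ∀ w : M', lam (β y') (β w) = 0)
    (hy'tor : ¬ IsOfFinAddOrder (β y')) :
    IsLagrangian (fun x y => lam x y) mu (Submodule.map β L') := by
  obtain ⟨hperp', hmu'⟩ := hL'
  obtain ⟨e⟩ := hquot
  obtain ⟨v₀, hv₀⟩ : ∃ v₀ : M, e (Submodule.Quotient.mk v₀) = 1 := by
    obtain ⟨q, hq⟩ := e.surjective 1
    obtain ⟨v₀, rfl⟩ := Submodule.Quotient.mk_surjective _ q
    exact ⟨v₀, hq⟩
  have hdec : ∀ x : M, ∃ (n : ℤ) (w : M'), x = n • v₀ + β w := by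
    intro x
    set n := e (Submodule.Quotient.mk x) with hn
    have h0 : (Submodule.Quotient.mk (x - n • v₀) : M ⧸ LinearMap.range β) = 0 := by
      apply e.injective
      have : (Submodule.Quotient.mk (x - n • v₀) : M ⧸ LinearMap.range β)
          = Submodule.Quotient.mk x - n • Submodule.Quotient.mk v₀ := by
        simp [Submodule.Quotient.mk_sub, Submodule.Quotient.mk_smul]
      rw [this, map_sub, map_zsmul, hv₀, ← hn]
      simp
    rw [Submodule.Quotient.mk_eq_zero] at h0
    obtain ⟨w, hw⟩ := h0
    exact ⟨n, w, by rw [hw]; abel⟩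
  have hc : lam (β y') v₀ ≠ 0 := by
    intro h0
    apply hy'tor
    apply hrad
    intro v
    obtain ⟨n, w, rfl⟩ := hdec v
    simp [map_add, h0, hy'perp w]
  constructor
  · ext x
    simp only [Set.mem_setOf_eq, SetLike.mem_coe]
    constructor
    · intro hx
      obtain ⟨n, u, rfl⟩ := hdec x
      have hn : n = 0 := by
        have h1 : lam (n • v₀ + β u) (β y') = 0 :=
          hx _ ⟨y', hy'L, rfl⟩
        rw [hsymm] at h1
        have h2 : lam (β y') (n • v₀ + β u) = n * lam (β y') v₀ := by
          simp [map_add, hy'perp u, smul_eq_mul]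
        rw [h2] at h1
        have h3 : n * lam (β y') v₀ = 0 := by
          rcases hε with rfl | rfl <;> linarith
        exact (mul_eq_zero.mp h3).resolve_right hc
      subst hn
      simp only [zero_smul, zero_add] at hx ⊢
      have hu : u ∈ {x : M' | ∀ v ∈ L', (fun x y => lam (β x) (β y)) x v = 0} := by
        intro v hv
        exact hx (β v) ⟨v, hv, rfl⟩
      rw [hperp'] at hu
      exact Submodule.mem_map_of_mem hu
    · rintro ⟨l, hl, rfl⟩ v ⟨w, hw, rfl⟩
      have hl2 : l ∈ {x : M' | ∀ v ∈ L', (fun x y => lam (β x) (β y)) x v = 0} := by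
        rw [hperp']; exact hl
      exact hl2 w hw
  · rintro l ⟨l', hl', rfl⟩
    exact hmu' l' hl'
end

section
/- Let ε ∈ {1, −1}, let β: M' → M be an injective ℤ-linear map of ℤ-modules, let λ: M × M → ℤ be an ε-symmetric ℤ-bilinear form, let μ be a function from M to a type with a zero element, and define λ'(x, y) := λ(β(x), β(y)) and μ' := μ ∘ β. Let L' ≤ M' be a submodule with (L')^⊥ = L' (with respect to λ') and μ'(l') = 0 for all l' ∈ L'. Suppose there exists y ∈ β(L') such that for every v ∈ M, λ(y, v) = 0 holds if and only if v lies in the range of β. Then the image β(L') satisfies (β(L'))^⊥ = β(L') with respect to λ, and μ vanishes on β(L'); that is, β(L') is a Lagrangian for (λ, μ). -/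
theorem lagrangian_image_of_detecting_element
    {M M' A : Type*} [AddCommGroup M] [Module ℤ M]
    [AddCommGroup M'] [Module ℤ M'] [Zero A]
    (ε : ℤ) (hε : ε = 1 ∨ ε = -1)
    (β : M' →ₗ[ℤ] M) (hβ : Function.Injective β)
    (lam : M →ₗ[ℤ] M →ₗ[ℤ] ℤ)
    (hsymm : ∀ x y : M, lam x y = ε * lam y x)
    (mu : M → A)
    (L' : Submodule ℤ M')
    (hL' : IsLagrangian (fun x y => lam (β x) (β y)) (fun x => mu (β x)) L')
    (y : M) (hy : y ∈ Submodule.map β L')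
    (hdet : ∀ v : M, lam y v = 0 ↔ v ∈ LinearMap.range β) :
    IsLagrangian (fun x y => lam x y) mu (Submodule.map β L') := by
  obtain ⟨horth, hmu⟩ := hL'
  constructor
  · ext x
    simp only [Set.mem_setOf_eq, SetLike.mem_coe]
    constructor
    · intro hx
      have hxy : lam x y = 0 := hx y hy
      have hyx : lam y x = 0 := by
        rcases hε with rfl | rfl <;> have := hsymm x y <;> omega
      obtain ⟨x', rfl⟩ := (hdet x).mp hyx
      have : x' ∈ {z : M' | ∀ v ∈ L', lam (β z) (β v) = 0} := by
        intro v hv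
        exact hx (β v) ⟨v, hv, rfl⟩
      rw [horth] at this
      exact ⟨x', this, rfl⟩
    · rintro ⟨l', hl', rfl⟩ v ⟨w, hw, rfl⟩
      have : l' ∈ (L' : Set M') := hl'
      rw [← horth] at this
      exact this w hw
  · rintro l ⟨l', hl', rfl⟩
    exact hmu l' hl'
end
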